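/- Let P_n(x,λ,z) denote the homogenization in degree 2n of the key polynomial P_n(x,λ) (with respect to a third variable z, using deg_x P_n = 2n). Then the dehomogenization with respect to λ, namely P_n(x,1,z), equals P_n(x,z); i.e., P_n is invariant under exchanging λ and z after homogenization. -/

import Mathlib

open MvPolynomial

/-- The Legendre cubic `f(x,λ) = x(x-1)(x-λ)`, with `x = X 0` and `λ = X 1`. -/
noncomputable def legf : MvPolynomial (Fin 2) ℝ := X 0 * (X 0 - 1) * (X 0 - X 1)

/-- The key polynomials: `P 1 = (1/2)∂f/∂x`,
`P (n+1) = (∂P n/∂x)·f + (-n+1/2)·(P n)·(∂f/∂x)` for `n ≥ 1`. -/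
noncomputable def P : ℕ → MvPolynomial (Fin 2) ℝ
  | 0 => 1
  | 1 => C (1 / 2 : ℝ) * pderiv 0 legf
  | n + 2 =>
      pderiv 0 (P (n + 1)) * legf
        + C (1 / 2 - (n + 1 : ℝ)) * (P (n + 1) * pderiv 0 legf)

/-- The homogenization of a polynomial in `x = X 0`, `λ = X 1` to degree `N`
with respect to a third variable `z = X 2`. -/
noncomputable def homog (N : ℕ) (p : MvPolynomial (Fin 2) ℝ) : MvPolynomial (Fin 3) ℝ :=
  ∑ d ∈ p.support,
    monomial (Finsupp.single 0 (d 0) + Finsupp.single 1 (d 1)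
      + Finsupp.single 2 (N - (d 0 + d 1))) (coeff d p)

/-- homogeneous lift of legf -/
noncomputable def F3 : MvPolynomial (Fin 3) ℝ := X 0 * (X 0 - X 2) * (X 0 - X 1)

noncomputable def Q : ℕ → MvPolynomial (Fin 3) ℝ
  | 0 => 1
  | 1 => C (1 / 2 : ℝ) * pderiv 0 F3
  | n + 2 =>
      pderiv 0 (Q (n + 1)) * F3
        + C (1 / 2 - (n + 1 : ℝ)) * (Q (n + 1) * pderiv 0 F3)

noncomputable def dh : MvPolynomial (Fin 3) ℝ →ₐ[ℝ] MvPolynomial (Fin 2) ℝ :=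
  aeval ![X 0, X 1, 1]

lemma dh_pderiv (q : MvPolynomial (Fin 3) ℝ) : pderiv 0 (dh q) = dh (pderiv 0 q) := by
  induction q using MvPolynomial.induction_on with
  | C a => simp [dh]
  | add p q hp hq => simp [hp, hq]
  | mul_X p j hp =>
      have key : pderiv 0 (dh (X j)) = dh (pderiv 0 (X j)) := by
        fin_cases j <;> simp [dh]
      rw [map_mul, pderiv_mul, pderiv_mul, map_add, map_mul, map_mul, hp, key]

lemma dh_F3 : dh F3 = legf := by
  simp [dh, F3, legf]

lemma Q_dehom : ∀ n, dh (Q n) = P n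
  | 0 => by simp [Q, P]
  | 1 => by simp [Q, P, ← dh_pderiv, dh_F3]
  | n + 2 => by
      have ih := Q_dehom (n + 1)
      simp only [Q, P, map_add, map_mul, dh_F3, ← dh_pderiv, ih]
      simp [dh]

lemma swap120 : Equiv.swap (1 : Fin 3) 2 0 = 0 := by decide
lemma swap_inj : Function.Injective (Equiv.swap (1 : Fin 3) 2) := (Equiv.swap _ _).injective

lemma F3_swap : rename (Equiv.swap (1 : Fin 3) 2) F3 = F3 := by
  simp only [F3, map_mul, map_sub, rename_X]
  have h1 : Equiv.swap (1 : Fin 3) 2 1 = 2 := by decide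
  have h2 : Equiv.swap (1 : Fin 3) 2 2 = 1 := by decide
  rw [swap120, h1, h2]; ring

lemma Q_swap : ∀ n, rename (Equiv.swap (1 : Fin 3) 2) (Q n) = Q n
  | 0 => by simp [Q]
  | 1 => by
      simp only [Q, map_mul, rename_C]
      have := pderiv_rename swap_inj 0 F3
      rw [swap120] at this
      rw [← this, F3_swap]
  | n + 2 => by
      have ih := Q_swap (n + 1)
      have hd : rename (Equiv.swap (1 : Fin 3) 2) (pderiv 0 (Q (n+1))) = pderiv 0 (Q (n+1)) := by
        have := pderiv_rename swap_inj 0 (Q (n+1))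
        rw [swap120] at this
        rw [← this, ih]
      have hdF : rename (Equiv.swap (1 : Fin 3) 2) (pderiv 0 F3) = pderiv 0 F3 := by
        have := pderiv_rename swap_inj 0 F3
        rw [swap120] at this
        rw [← this, F3_swap]
      simp only [Q, map_add, map_mul, rename_C, ih, hd, hdF, F3_swap]

lemma degree_sub_single {σ : Type*} [DecidableEq σ] (d : Finsupp σ ℕ) (i : σ) (h : d i ≠ 0) :
    (d - Finsupp.single i 1).degree + 1 = d.degree := by
  have hd : (d - Finsupp.single i 1) + Finsupp.single i 1 = d := by
    ext j
    by_cases hj : j = i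
    · subst hj; simp [Finsupp.sub_apply]; omega
    · simp [Finsupp.sub_apply, Finsupp.single_apply, hj, Ne.symm hj]
  have hs : (Finsupp.single i 1 : σ →₀ ℕ).degree = 1 := by
    simp [Finsupp.support_single_ne_zero i one_ne_zero]
  calc (d - Finsupp.single i 1).degree + 1
      = ((d - Finsupp.single i 1) + Finsupp.single i 1).degree := by
        simp only [Finsupp.degree_eq_weight_one, map_add] at hs ⊢
        rw [hs]
    _ = d.degree := by rw [hd]

lemma isHomogeneous_pderiv {p : MvPolynomial (Fin 3) ℝ} {n : ℕ}
    (h : p.IsHomogeneous n) (i : Fin 3) : (pderiv i p).IsHomogeneous (n - 1) := by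
  rw [← p.support_sum_monomial_coeff, map_sum]
  apply MvPolynomial.IsHomogeneous.sum
  intro d hd
  rw [pderiv_monomial]
  by_cases hdi : d i = 0
  · simp only [hdi, Nat.cast_zero, mul_zero, map_zero]
    exact isHomogeneous_zero _ _ _
  · apply isHomogeneous_monomial
    have hdeg : d.degree = n := by
      have := h (MvPolynomial.mem_support_iff.mp hd)
      rwa [Pi.one_def, ← Finsupp.degree_eq_weight_one] at this
    have := degree_sub_single d i hdi
    omega

lemma F3_hom : F3.IsHomogeneous 3 := by
  have h0 := isHomogeneous_X ℝ (0 : Fin 3)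
  have h1 := (isHomogeneous_X ℝ (0 : Fin 3)).sub (isHomogeneous_X ℝ (2 : Fin 3))
  have h2 := (isHomogeneous_X ℝ (0 : Fin 3)).sub (isHomogeneous_X ℝ (1 : Fin 3))
  exact (h0.mul h1).mul h2

lemma Q_hom : ∀ n, 1 ≤ n → (Q n).IsHomogeneous (2 * n)
  | 0, h => by omega
  | 1, _ => by
      rw [Q]
      exact (isHomogeneous_pderiv F3_hom 0).C_mul _
  | n + 2, _ => by
      have ih := Q_hom (n + 1) (by omega)
      rw [Q]
      apply MvPolynomial.IsHomogeneous.add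
      · have := (isHomogeneous_pderiv ih 0).mul F3_hom
        have e : 2 * (n + 1) - 1 + 3 = 2 * (n + 2) := by omega
        rwa [e] at this
      · have := (ih.mul (isHomogeneous_pderiv F3_hom 0)).C_mul (1 / 2 - (n + 1 : ℝ))
        have e : 2 * (n + 1) + (3 - 1) = 2 * (n + 2) := by omega
        rwa [e] at this

/-- exponent projection -/
noncomputable def pr (e : Fin 3 →₀ ℕ) : Fin 2 →₀ ℕ := Finsupp.single 0 (e 0) + Finsupp.single 1 (e 1)

@[simp] lemma pr_apply0 (e : Fin 3 →₀ ℕ) : pr e 0 = e 0 := by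
  simp [pr, Finsupp.single_apply]

@[simp] lemma pr_apply1 (e : Fin 3 →₀ ℕ) : pr e 1 = e 1 := by
  simp [pr, Finsupp.single_apply]

lemma dh_monomial (e : Fin 3 →₀ ℕ) (c : ℝ) : dh (monomial e c) = monomial (pr e) c := by
  rw [dh, aeval_monomial, Finsupp.prod_fintype _ _ (fun i => pow_zero _), Fin.prod_univ_three]
  simp only [Matrix.cons_val_zero, Matrix.cons_val_one, Matrix.head_cons,
    Matrix.cons_val_two, Matrix.tail_cons, one_pow, mul_one]
  rw [pr, X_pow_eq_monomial, X_pow_eq_monomial, monomial_mul, algebraMap_eq, C_mul_monomial]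
  simp

lemma homog_dh_eq {N : ℕ} {q : MvPolynomial (Fin 3) ℝ} (h : q.IsHomogeneous N) :
    homog N (dh q) = q := by
  have hdeg : ∀ e ∈ q.support, e 0 + e 1 + e 2 = N := by
    intro e he
    have h1 := h (MvPolynomial.mem_support_iff.mp he)
    rw [Pi.one_def, ← Finsupp.degree_eq_weight_one] at h1
    have h2 : e.degree = ∑ i : Fin 3, e i :=
      Finset.sum_subset (Finset.subset_univ _)
        (fun i _ hi => Finsupp.notMem_support_iff.mp hi)
    rw [h2, Fin.sum_univ_three] at h1
    exact h1
  have hinj : ∀ e ∈ q.support, ∀ e' ∈ q.support, pr e = pr e' → e = e' := by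
    intro e he e' he' hee
    have c0 : e 0 = e' 0 := by rw [← pr_apply0, ← pr_apply0, hee]
    have c1 : e 1 = e' 1 := by rw [← pr_apply1, ← pr_apply1, hee]
    have d1 := hdeg e he
    have d2 := hdeg e' he'
    ext i
    fin_cases i
    · exact c0
    · exact c1
    · show e 2 = e' 2
      omega
  have hdh : dh q = ∑ e ∈ q.support, monomial (pr e) (coeff e q) := by
    conv_lhs => rw [← q.support_sum_monomial_coeff]
    rw [map_sum]
    exact Finset.sum_congr rfl fun e _ => dh_monomial e _
  have hcoeff : ∀ d, coeff d (dh q) = ∑ e ∈ q.support, if pr e = d then coeff e q else 0 := by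
    intro d
    rw [hdh, coeff_sum]
    exact Finset.sum_congr rfl fun e _ => coeff_monomial _ _ _
  have hsub : (dh q).support ⊆ q.support.image pr := by
    intro d hd
    rw [MvPolynomial.mem_support_iff] at hd
    by_contra hdim
    apply hd
    rw [hcoeff d]
    apply Finset.sum_eq_zero
    intro e he
    rw [if_neg]
    exact fun hpe => hdim (Finset.mem_image.mpr ⟨e, he, hpe⟩)
  have hcoeff2 : ∀ e ∈ q.support, coeff (pr e) (dh q) = coeff e q := by
    intro e he
    rw [hcoeff]
    rw [Finset.sum_eq_single e (fun e' he' hne => if_neg fun hpe => hne (hinj e' he' e he hpe))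
      (fun he' => absurd he he')]
    simp
  have hback : ∀ e ∈ q.support,
      Finsupp.single (0 : Fin 3) (pr e 0) + Finsupp.single 1 (pr e 1)
        + Finsupp.single 2 (N - (pr e 0 + pr e 1)) = e := by
    intro e he
    have d1 := hdeg e he
    ext i
    fin_cases i <;> simp [Finsupp.single_apply] <;> omega
  rw [homog]
  rw [Finset.sum_subset hsub (fun d _ hd => by
    rw [MvPolynomial.notMem_support_iff.mp hd, map_zero])]
  rw [Finset.sum_image hinj]
  rw [Finset.sum_congr rfl fun e he => by rw [hback e he, hcoeff2 e he]]
  exact q.support_sum_monomial_coeff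

/-- Homogenizing `P n` to degree `2n` (using `deg_x P n = 2n`) and then dehomogenizing with
respect to `λ` (setting `λ = 1`) recovers `P n` with `z` in place of `λ`; equivalently, the
homogenization is invariant under exchanging `λ` and `z`. -/
theorem keyPolynomial_lambda_z_symmetry :
    ∀ n : ℕ, 1 ≤ n →
      aeval (![X 0, 1, X 1] : Fin 3 → MvPolynomial (Fin 2) ℝ) (homog (2 * n) (P n)) = P n
        ∧ rename (Equiv.swap (1 : Fin 3) 2) (homog (2 * n) (P n)) = homog (2 * n) (P n) := by
  intro n hn
  have hQ : homog (2 * n) (P n) = Q n := by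
    rw [← Q_dehom n]
    exact homog_dh_eq (Q_hom n hn)
  constructor
  · rw [hQ]
    conv_lhs => rw [← Q_swap n]
    rw [aeval_rename]
    have hv : (![X 0, 1, X 1] : Fin 3 → MvPolynomial (Fin 2) ℝ) ∘ (Equiv.swap (1 : Fin 3) 2)
        = ![X 0, X 1, 1] := by
      funext i
      fin_cases i <;> rfl
    rw [hv]
    exact Q_dehom n
  · rw [hQ]
    exact Q_swap n
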